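/- arXiv:2503.14882 — 3 statements merged into one kernel-verified Lean document; each statement's English description precedes it below -/
import Mathlib

section
/- (Convex hull of projection matrices) For m ≥ d ≥ 1, let Ω₁ = {Y : Y = X Xᴴ for some m×d complex matrix X with XᴴX = I_d} and Ω₂ = {Y Hermitian m×m : tr(Y) = d, 0 ⪯ Y ⪯ I}. Then Ω₁ ⊆ Ω₂, Ω₂ is convex, and every element of Ω₁ is an extreme point of Ω₂. -/
open Matrix
open scoped ComplexOrder

private lemma psd_smul {n : ℕ} (a : ℝ) (ha : 0 ≤ a) {A : Matrix (Fin n) (Fin n) ℂ}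
    (hA : A.PosSemidef) : (a • A).PosSemidef := by
  refine .of_dotProduct_mulVec_nonneg ?_ ?_
  · have : (a • A)ᴴ = a • A := by
      rw [conjTranspose_smul, hA.1.eq]; norm_num
    exact this
  · intro x
    rw [smul_mulVec, dotProduct_smul]
    have h := hA.dotProduct_mulVec_nonneg x
    rw [Complex.real_smul]
    exact mul_nonneg (by exact_mod_cast ha) h

private lemma zero_of_convex {n : ℕ} {A B : Matrix (Fin n) (Fin n) ℂ} {a b : ℝ}
    (ha : 0 < a) (hb : 0 < b) (hA : A.PosSemidef) (hB : B.PosSemidef)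
    (v : Fin n → ℂ) (h : (a • A + b • B) *ᵥ v = 0) : A *ᵥ v = 0 := by
  have hq : (0 : ℂ) ≤ star v ⬝ᵥ A *ᵥ v := hA.dotProduct_mulVec_nonneg v
  have hr : (0 : ℂ) ≤ star v ⬝ᵥ B *ᵥ v := hB.dotProduct_mulVec_nonneg v
  have hsum : (a : ℂ) * (star v ⬝ᵥ A *ᵥ v) + (b : ℂ) * (star v ⬝ᵥ B *ᵥ v) = 0 := by
    have := congrArg (fun w => star v ⬝ᵥ w) h
    simpa [add_mulVec, smul_mulVec, dotProduct_add, dotProduct_smul,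
      Complex.real_smul] using this
  have ha' : (0 : ℂ) ≤ (a : ℂ) * (star v ⬝ᵥ A *ᵥ v) :=
    mul_nonneg (by exact_mod_cast ha.le) hq
  have hb' : (0 : ℂ) ≤ (b : ℂ) * (star v ⬝ᵥ B *ᵥ v) :=
    mul_nonneg (by exact_mod_cast hb.le) hr
  have h0 : (a : ℂ) * (star v ⬝ᵥ A *ᵥ v) = 0 := by
    have : (a : ℂ) * (star v ⬝ᵥ A *ᵥ v) ≤ 0 := by
      calc (a : ℂ) * (star v ⬝ᵥ A *ᵥ v)
          = -((b : ℂ) * (star v ⬝ᵥ B *ᵥ v)) := by linear_combination hsum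
        _ ≤ 0 := neg_nonpos_of_nonneg hb'
    exact le_antisymm this ha'
  have ha0 : (a : ℂ) ≠ 0 := by exact_mod_cast ha.ne'
  have : star v ⬝ᵥ A *ᵥ v = 0 := (mul_eq_zero.mp h0).resolve_left ha0
  exact (hA.dotProduct_mulVec_zero_iff v).mp this

/-- Convex hull relaxation (Overton–Womersley): with
`Ω₁ = {X Xᴴ : Xᴴ X = I_d}` and `Ω₂ = {Y Hermitian : tr Y = d, 0 ⪯ Y ⪯ I}`,
one has `Ω₁ ⊆ Ω₂`, `Ω₂` is convex, and every element of `Ω₁` is an extreme point of `Ω₂`. -/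
theorem projection_convex_hull (m d : ℕ) (hd : 1 ≤ d) (hmd : d ≤ m)
    (Ω₁ Ω₂ : Set (Matrix (Fin m) (Fin m) ℂ))
    (hΩ₁ : Ω₁ = {Y | ∃ X : Matrix (Fin m) (Fin d) ℂ, Xᴴ * X = 1 ∧ Y = X * Xᴴ})
    (hΩ₂ : Ω₂ = {Y | Y.IsHermitian ∧ Y.trace = (d : ℂ) ∧ Y.PosSemidef ∧ (1 - Y).PosSemidef}) :
    Ω₁ ⊆ Ω₂ ∧ Convex ℝ Ω₂ ∧ ∀ Y ∈ Ω₁, Y ∈ Set.extremePoints ℝ Ω₂ := by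
  -- Part 1 : Ω₁ ⊆ Ω₂
  have hsub : Ω₁ ⊆ Ω₂ := by
    intro Y hY
    rw [hΩ₁] at hY
    obtain ⟨X, hX, rfl⟩ := hY
    rw [hΩ₂]
    have hidem : (X * Xᴴ) * (X * Xᴴ) = X * Xᴴ := by
      calc (X * Xᴴ) * (X * Xᴴ) = X * (Xᴴ * X) * Xᴴ := by
            simp only [Matrix.mul_assoc]
        _ = X * Xᴴ := by rw [hX, Matrix.mul_one]
    refine ⟨isHermitian_mul_conjTranspose_self X, ?_, posSemidef_self_mul_conjTranspose X, ?_⟩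
    · rw [trace_mul_comm, hX, trace_one]
      simp
    · have hherm : (1 - X * Xᴴ)ᴴ = 1 - X * Xᴴ := by
        rw [conjTranspose_sub, conjTranspose_one, (isHermitian_mul_conjTranspose_self X).eq]
      have hidem' : (1 - X * Xᴴ)ᴴ * (1 - X * Xᴴ) = 1 - X * Xᴴ := by
        rw [hherm, sub_mul, one_mul, mul_sub, mul_one, hidem, sub_self, sub_zero]
      have h := posSemidef_conjTranspose_mul_self (1 - X * Xᴴ)
      rwa [hidem'] at h
  refine ⟨hsub, ?_, ?_⟩
  -- Part 2 : convexity
  · intro Y₁ h1 Y₂ h2 a b ha hb hab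
    rw [hΩ₂] at h1 h2 ⊢
    obtain ⟨hH1, hT1, hP1, hQ1⟩ := h1
    obtain ⟨hH2, hT2, hP2, hQ2⟩ := h2
    have hpsd : (a • Y₁ + b • Y₂).PosSemidef := (psd_smul a ha hP1).add (psd_smul b hb hP2)
    have hone : (1 : Matrix (Fin m) (Fin m) ℂ) - (a • Y₁ + b • Y₂)
        = a • (1 - Y₁) + b • (1 - Y₂) := by
      have h1' : a • (1 : Matrix (Fin m) (Fin m) ℂ) + b • 1 = 1 := by
        rw [← add_smul, hab, one_smul]
      calc (1 : Matrix (Fin m) (Fin m) ℂ) - (a • Y₁ + b • Y₂)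
          = (a • (1 : Matrix (Fin m) (Fin m) ℂ) + b • 1) - (a • Y₁ + b • Y₂) := by rw [h1']
        _ = a • (1 - Y₁) + b • (1 - Y₂) := by module
    refine ⟨hpsd.1, ?_, hpsd, ?_⟩
    · rw [trace_add, trace_smul, trace_smul, hT1, hT2, ← add_smul, hab, one_smul]
    · rw [hone]
      exact (psd_smul a ha hQ1).add (psd_smul b hb hQ2)
  -- Part 3 : extreme points
  · intro Y hY
    rw [mem_extremePoints]
    refine ⟨hsub hY, ?_⟩
    rw [hΩ₁] at hY
    obtain ⟨X, hX, rfl⟩ := hY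
    set Y := X * Xᴴ with hYdef
    have hidem : Y * Y = Y := by
      calc Y * Y = X * (Xᴴ * X) * Xᴴ := by simp only [hYdef, Matrix.mul_assoc]
        _ = Y := by rw [hX, Matrix.mul_one]
    have key : ∀ (a b : ℝ), 0 < a → 0 < b → a + b = 1 →
        ∀ Z W : Matrix (Fin m) (Fin m) ℂ, Z ∈ Ω₂ → W ∈ Ω₂ →
        a • Z + b • W = Y → Z = Y := by
      intro a b ha hb hab Z W hZ hW hsum
      rw [hΩ₂] at hZ hW
      obtain ⟨-, -, hZp, hZq⟩ := hZ
      obtain ⟨-, -, hWp, hWq⟩ := hW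
      have hker : ∀ v, Y *ᵥ v = 0 → Z *ᵥ v = 0 := by
        intro v hv
        exact zero_of_convex ha hb hZp hWp v (by rw [hsum, hv])
      have hone : a • ((1 : Matrix (Fin m) (Fin m) ℂ) - Z) + b • (1 - W) = 1 - Y := by
        have h1' : a • (1 : Matrix (Fin m) (Fin m) ℂ) + b • 1 = 1 := by
          rw [← add_smul, hab, one_smul]
        calc a • ((1 : Matrix (Fin m) (Fin m) ℂ) - Z) + b • (1 - W)
            = (a • (1 : Matrix (Fin m) (Fin m) ℂ) + b • 1) - (a • Z + b • W) := by module
          _ = 1 - Y := by rw [h1', hsum]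
      have hran : ∀ v, Y *ᵥ v = v → Z *ᵥ v = v := by
        intro v hv
        have h0 : (a • ((1 : Matrix (Fin m) (Fin m) ℂ) - Z) + b • (1 - W)) *ᵥ v = 0 := by
          rw [hone, sub_mulVec, one_mulVec, hv, sub_self]
        have := zero_of_convex ha hb hZq hWq v h0
        rw [sub_mulVec, one_mulVec] at this
        exact (sub_eq_zero.mp this).symm
      have hvec : ∀ v, Z *ᵥ v = Y *ᵥ v := by
        intro v
        have h1 : Y *ᵥ (Y *ᵥ v) = Y *ᵥ v := by rw [mulVec_mulVec, hidem]
        have h2 : Y *ᵥ (v - Y *ᵥ v) = 0 := by rw [mulVec_sub, h1, sub_self]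
        have hv' : Y *ᵥ v + (v - Y *ᵥ v) = v := by abel
        calc Z *ᵥ v = Z *ᵥ (Y *ᵥ v) + Z *ᵥ (v - Y *ᵥ v) := by
              rw [← mulVec_add, hv']
          _ = Y *ᵥ v + 0 := by rw [hran _ h1, hker _ h2]
          _ = Y *ᵥ v := add_zero _
      ext i j
      have h := congrFun (hvec (Pi.single j 1)) i
      simpa [mulVec_single] using h
    intro Y₁ hY₁ Y₂ hY₂ hseg
    obtain ⟨a, b, ha, hb, hab, hsum⟩ := hseg
    refine ⟨key a b ha hb hab Y₁ Y₂ hY₁ hY₂ hsum, ?_⟩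
    exact key b a hb ha (by linarith) Y₂ Y₁ hY₂ hY₁ (by rw [add_comm]; exact hsum)
end

section
/- Let ẑ = Aᴴ Σ_{n=1}^N H_n B_n z_n + Aᴴ n, where the z_n ∈ ℂ^L are zero-mean random vectors with E[z_n z_nᴴ] = I_L, mutually uncorrelated, and n is a zero-mean noise vector with covariance σ²I independent of the z_n. Then E[(ẑ − Σ_n z_n)ᴴ(ẑ − Σ_n z_n)] = Σ_{n=1}^N tr((AᴴH_nB_n − I)(AᴴH_nB_n − I)ᴴ) + σ² tr(AᴴA). -/
open Matrix MeasureTheory ProbabilityTheory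

section auxAircomp
variable {Ω : Type*} [MeasurableSpace Ω] {μ : Measure Ω}

lemma aux_memℒp_star {g : Ω → ℂ} (hg : MemLp g 2 μ) :
    MemLp (fun ω => star (g ω)) 2 μ :=
  hg.of_le (continuous_star.comp_aestronglyMeasurable hg.1)
    (Filter.Eventually.of_forall fun ω => by simp)

lemma aux_integrable_mul {f g : Ω → ℂ} (hf : MemLp f 2 μ) (hg : MemLp g 2 μ) :
    Integrable (fun ω => f ω * g ω) μ := by
  have h := MemLp.smul (p := 2) (q := 2) (r := 1) hg hf
  rw [memLp_one_iff_integrable] at h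
  · exact h

lemma aux_indep_integral_mul {Z V : Ω → ℂ} (h : IndepFun Z V μ)
    (hZ : Integrable Z μ) (hV : Integrable V μ) :
    ∫ ω, Z ω * V ω ∂μ = (∫ ω, Z ω ∂μ) * ∫ ω, V ω ∂μ := by
  have hZV : Integrable (fun ω => Z ω * V ω) μ := by
    exact h.integrable_mul hZ hV
  have hZr : Integrable (fun ω => (Z ω).re) μ := by simpa using hZ.re
  have hZi : Integrable (fun ω => (Z ω).im) μ := by simpa using hZ.im
  have hVr : Integrable (fun ω => (V ω).re) μ := by simpa using hV.re
  have hVi : Integrable (fun ω => (V ω).im) μ := by simpa using hV.im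
  have hre : IndepFun (fun ω => (Z ω).re) (fun ω => (V ω).re) μ :=
    h.comp Complex.measurable_re Complex.measurable_re
  have hri : IndepFun (fun ω => (Z ω).re) (fun ω => (V ω).im) μ :=
    h.comp Complex.measurable_re Complex.measurable_im
  have hir : IndepFun (fun ω => (Z ω).im) (fun ω => (V ω).re) μ :=
    h.comp Complex.measurable_im Complex.measurable_re
  have hii : IndepFun (fun ω => (Z ω).im) (fun ω => (V ω).im) μ :=
    h.comp Complex.measurable_im Complex.measurable_im
  have irr : Integrable (fun ω => (Z ω).re * (V ω).re) μ := by
    exact hre.integrable_mul hZr hVr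
  have iri : Integrable (fun ω => (Z ω).re * (V ω).im) μ := by
    exact hri.integrable_mul hZr hVi
  have iir : Integrable (fun ω => (Z ω).im * (V ω).re) μ := by
    exact hir.integrable_mul hZi hVr
  have iii : Integrable (fun ω => (Z ω).im * (V ω).im) μ := by
    exact hii.integrable_mul hZi hVi
  have err : ∫ ω, (Z ω).re * (V ω).re ∂μ = (∫ ω, (Z ω).re ∂μ) * ∫ ω, (V ω).re ∂μ :=
    hre.integral_fun_mul_eq_mul_integral hZr.aestronglyMeasurable hVr.aestronglyMeasurable
  have eri : ∫ ω, (Z ω).re * (V ω).im ∂μ = (∫ ω, (Z ω).re ∂μ) * ∫ ω, (V ω).im ∂μ :=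
    hri.integral_fun_mul_eq_mul_integral hZr.aestronglyMeasurable hVi.aestronglyMeasurable
  have eir : ∫ ω, (Z ω).im * (V ω).re ∂μ = (∫ ω, (Z ω).im ∂μ) * ∫ ω, (V ω).re ∂μ :=
    hir.integral_fun_mul_eq_mul_integral hZi.aestronglyMeasurable hVr.aestronglyMeasurable
  have eii : ∫ ω, (Z ω).im * (V ω).im ∂μ = (∫ ω, (Z ω).im ∂μ) * ∫ ω, (V ω).im ∂μ :=
    hii.integral_fun_mul_eq_mul_integral hZi.aestronglyMeasurable hVi.aestronglyMeasurable
  have hZre : (∫ ω, Z ω ∂μ).re = ∫ ω, (Z ω).re ∂μ := by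
    simpa using (integral_re hZ).symm
  have hZim : (∫ ω, Z ω ∂μ).im = ∫ ω, (Z ω).im ∂μ := by
    simpa using (integral_im hZ).symm
  have hVre : (∫ ω, V ω ∂μ).re = ∫ ω, (V ω).re ∂μ := by
    simpa using (integral_re hV).symm
  have hVim : (∫ ω, V ω ∂μ).im = ∫ ω, (V ω).im ∂μ := by
    simpa using (integral_im hV).symm
  have hZVre : (∫ ω, Z ω * V ω ∂μ).re = ∫ ω, (Z ω * V ω).re ∂μ := by
    simpa using (integral_re hZV).symm
  have hZVim : (∫ ω, Z ω * V ω ∂μ).im = ∫ ω, (Z ω * V ω).im ∂μ := by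
    simpa using (integral_im hZV).symm
  apply Complex.ext
  · rw [hZVre]
    simp only [Complex.mul_re]
    rw [integral_sub irr iii, err, eii, hZre, hZim, hVre, hVim]
  · rw [hZVim]
    simp only [Complex.mul_im]
    rw [integral_add iri iir, eri, eir, hZre, hZim, hVre, hVim]

lemma aux_quad {ι : Type*} [Fintype ι] (X : ι → Ω → ℂ) (hX : ∀ i, MemLp (X i) 2 μ) (c : ι → ℂ) :
    ∫ ω, ‖∑ i, c i * X i ω‖ ^ 2 ∂μ
      = (∑ i, ∑ j, c i * star (c j) * ∫ ω, X i ω * star (X j ω) ∂μ).re := by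
  have hprod : ∀ i j, Integrable (fun ω => X i ω * star (X j ω)) μ := fun i j =>
    aux_integrable_mul (hX i) (aux_memℒp_star (hX j))
  have hterm : ∀ i j, Integrable (fun ω => c i * star (c j) * (X i ω * star (X j ω))) μ :=
    fun i j => (hprod i j).const_mul _
  have hbig : Integrable (fun ω => ∑ i, ∑ j, c i * star (c j) * (X i ω * star (X j ω))) μ :=
    integrable_finset_sum _ (fun i _ => integrable_finset_sum _ (fun j _ => hterm i j))
  have hexp : ∀ ω, (‖∑ i, c i * X i ω‖ : ℝ) ^ 2
      = (∑ i, ∑ j, c i * star (c j) * (X i ω * star (X j ω))).re := by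
    intro ω
    have h2 : (∑ i, c i * X i ω) * star (∑ j, c j * X j ω)
        = ∑ i, ∑ j, c i * star (c j) * (X i ω * star (X j ω)) := by
      rw [star_sum, Finset.sum_mul_sum]
      refine Finset.sum_congr rfl fun i _ => Finset.sum_congr rfl fun j _ => ?_
      rw [star_mul']
      ring
    rw [← h2]
    rw [show star (∑ j, c j * X j ω) = (starRingEnd ℂ) (∑ j, c j * X j ω) from rfl,
      Complex.mul_conj]
    simp [Complex.sq_norm]
  calc ∫ ω, ‖∑ i, c i * X i ω‖ ^ 2 ∂μ
      = ∫ ω, (∑ i, ∑ j, c i * star (c j) * (X i ω * star (X j ω))).re ∂μ := by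
        exact integral_congr_ae (Filter.Eventually.of_forall fun ω => hexp ω)
    _ = (∫ ω, ∑ i, ∑ j, c i * star (c j) * (X i ω * star (X j ω)) ∂μ).re := by
        simpa using integral_re hbig
    _ = (∑ i, ∑ j, c i * star (c j) * ∫ ω, X i ω * star (X j ω) ∂μ).re := by
        rw [integral_finset_sum _ (fun i _ => integrable_finset_sum _ (fun j _ => hterm i j))]
        congr 1
        refine Finset.sum_congr rfl fun i _ => ?_
        rw [integral_finset_sum _ (fun j _ => hterm i j)]
        refine Finset.sum_congr rfl fun j _ => ?_
        simpa [smul_eq_mul] using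
          integral_smul (c i * star (c j)) (fun ω => X i ω * star (X j ω))

section
variable {Ω : Type*} [MeasurableSpace Ω] {μ : Measure Ω}

lemma aux_normsq (u : ℂ) : ‖u‖ ^ 2 = (u * star u).re := by
  rw [show star u = (starRingEnd ℂ) u from rfl, Complex.mul_conj]
  simp [Complex.sq_norm]
end
end auxAircomp

/-- Multi-antenna AirComp MSE: with `ẑ = Aᴴ Σ_n H_n B_n z_n + Aᴴ w`, where the `z_n ∈ ℂ^L`
are zero-mean, have identity covariance, are mutually uncorrelated, and `w` is zero-mean
noise with covariance `σ²I` independent of the `z_n`, one has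
`E[(ẑ − Σ_n z_n)ᴴ(ẑ − Σ_n z_n)] = Σ_n tr((AᴴH_nB_n − I)(AᴴH_nB_n − I)ᴴ) + σ² tr(AᴴA)`. -/
theorem aircomp_mse_multi_antenna (Nr Nt L N : ℕ) {Ω : Type*} [MeasurableSpace Ω]
    (μ : Measure Ω) [IsProbabilityMeasure μ]
    (A : Matrix (Fin Nr) (Fin L) ℂ) (H : Fin N → Matrix (Fin Nr) (Fin Nt) ℂ)
    (B : Fin N → Matrix (Fin Nt) (Fin L) ℂ) (σ : ℝ)
    (z : Fin N → Ω → Fin L → ℂ) (w : Ω → Fin Nr → ℂ)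
    (hzL2 : ∀ n k, MemLp (fun ω => z n ω k) 2 μ)
    (hwL2 : ∀ i, MemLp (fun ω => w ω i) 2 μ)
    (hzmean : ∀ n k, ∫ ω, z n ω k ∂μ = 0)
    (hzcov : ∀ n k l, ∫ ω, z n ω k * star (z n ω l) ∂μ = if k = l then 1 else 0)
    (hzuncorr : ∀ n m, n ≠ m → ∀ k l, ∫ ω, z n ω k * star (z m ω l) ∂μ = 0)
    (hwmean : ∀ i, ∫ ω, w ω i ∂μ = 0)
    (hwcov : ∀ i j, ∫ ω, w ω i * star (w ω j) ∂μ = if i = j then (σ ^ 2 : ℂ) else 0)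
    (hindep : IndepFun (fun ω => fun p : Fin N × Fin L => z p.1 ω p.2) w μ)
    (zhat : Ω → Fin L → ℂ)
    (hzhat : zhat = fun ω => Aᴴ *ᵥ ((∑ n, (H n * B n) *ᵥ z n ω) + w ω)) :
    ∫ ω, ∑ k, ‖zhat ω k - ∑ n, z n ω k‖ ^ 2 ∂μ
      = (∑ n, ((Aᴴ * H n * B n - 1) * (Aᴴ * H n * B n - 1)ᴴ).trace.re)
          + σ ^ 2 * (Aᴴ * A).trace.re := by
    classical
  set M : Fin N → Matrix (Fin L) (Fin L) ℂ := fun n => Aᴴ * H n * B n - 1 with hM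
  set X : (Fin N × Fin L) ⊕ Fin Nr → Ω → ℂ :=
    Sum.elim (fun p ω => z p.1 ω p.2) (fun i ω => w ω i) with hXdef
  set c : Fin L → (Fin N × Fin L) ⊕ Fin Nr → ℂ :=
    fun k => Sum.elim (fun p => M p.1 k p.2) (fun i => Aᴴ k i) with hcdef
  set G : ((Fin N × Fin L) ⊕ Fin Nr) → ((Fin N × Fin L) ⊕ Fin Nr) → ℂ :=
    Sum.elim (fun p => Sum.elim (fun q => if p = q then (1 : ℂ) else 0) (fun _ => 0))
      (fun i => Sum.elim (fun _ => 0) (fun j => if i = j then ((σ : ℂ) ^ 2) else 0)) with hGdef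
  have hX : ∀ i, MemLp (X i) 2 μ := by rintro (p | i); exacts [hzL2 p.1 p.2, hwL2 i]
  have hcross : ∀ n l i, ∫ ω, z n ω l * star (w ω i) ∂μ = 0 := by
    intro n l i
    have hZ : Integrable (fun ω => z n ω l) μ := (hzL2 n l).integrable one_le_two
    have hW : Integrable (fun ω => star (w ω i)) μ :=
      (aux_memℒp_star (hwL2 i)).integrable one_le_two
    have hind : IndepFun (fun ω => z n ω l) (fun ω => star (w ω i)) μ :=
      hindep.comp (measurable_pi_apply (n, l)) (continuous_star.measurable.comp (measurable_pi_apply i))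
    rw [aux_indep_integral_mul hind hZ hW, hzmean n l, zero_mul]
  have hG : ∀ i j, ∫ ω, X i ω * star (X j ω) ∂μ = G i j := by
    rintro (p | i) (q | j)
    · obtain ⟨n, l⟩ := p; obtain ⟨m, l'⟩ := q
      by_cases h : n = m
      · subst h
        simpa [hXdef, hGdef, Prod.ext_iff] using hzcov n l l'
      · simpa [hXdef, hGdef, Prod.ext_iff, h] using hzuncorr n m h l l'
    · simpa [hXdef, hGdef] using hcross p.1 p.2 j
    · have h0 := hcross q.1 q.2 i
      have h1 : ∫ ω, X (Sum.inr i) ω * star (X (Sum.inl q) ω) ∂μ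
          = star (∫ ω, z q.1 ω q.2 * star (w ω i) ∂μ) := by
        rw [show star (∫ ω, z q.1 ω q.2 * star (w ω i) ∂μ)
            = ∫ ω, (starRingEnd ℂ) (z q.1 ω q.2 * star (w ω i)) ∂μ from integral_conj.symm]
        refine integral_congr_ae (Filter.Eventually.of_forall fun ω => ?_)
        simp only [hXdef, Sum.elim_inl, Sum.elim_inr]
        rw [show ((starRingEnd ℂ) (z q.1 ω q.2 * star (w ω i)))
            = star (z q.1 ω q.2 * star (w ω i)) from rfl, star_mul', star_star]
        ring
      rw [h1, h0, star_zero]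
      simp [hGdef]
    · simpa [hXdef, hGdef] using hwcov i j
  have key : ∀ ω k, zhat ω k - ∑ n, z n ω k = ∑ i, c k i * X i ω := by
    intro ω k
    have hs : Aᴴ *ᵥ (∑ n, (H n * B n) *ᵥ z n ω) = ∑ n, (Aᴴ * H n * B n) *ᵥ z n ω := by
      rw [show Aᴴ *ᵥ (∑ n, (H n * B n) *ᵥ z n ω)
          = Matrix.mulVecLin Aᴴ (∑ n, (H n * B n) *ᵥ z n ω) from rfl, map_sum]
      refine Finset.sum_congr rfl fun n _ => ?_
      rw [Matrix.mulVecLin_apply, mulVec_mulVec, Matrix.mul_assoc]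
    simp only [hzhat, mulVec_add, hs, Pi.add_apply, Finset.sum_apply]
    rw [Fintype.sum_sum_type]
    simp only [hcdef, hXdef, Sum.elim_inl, Sum.elim_inr]
    rw [Fintype.sum_prod_type]
    have hw' : (Aᴴ *ᵥ w ω) k = ∑ i, Aᴴ k i * w ω i := by
      simp [Matrix.mulVec, dotProduct]
    have hz' : ∀ n, ((Aᴴ * H n * B n) *ᵥ z n ω) k - z n ω k = ∑ l, M n k l * z n ω l := by
      intro n
      have h2 : (∑ l, M n k l * z n ω l) = ((M n) *ᵥ z n ω) k := by
        simp [Matrix.mulVec, dotProduct]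
      rw [h2, hM]
      simp only [sub_mulVec, one_mulVec, Pi.sub_apply]
    rw [add_sub_right_comm, ← Finset.sum_sub_distrib]
    rw [Finset.sum_congr rfl fun n _ => hz' n, hw']
  have hS : ∀ k, MemLp (fun ω => ∑ i, c k i * X i ω) 2 μ := by
    intro k
    have h := memLp_finset_sum' (μ := μ) Finset.univ
      (fun i (_ : i ∈ Finset.univ) => (hX i).const_mul (c k i))
    exact h.ae_eq (Filter.Eventually.of_forall fun ω => by simp)
  have hint : ∀ k, Integrable (fun ω => ‖∑ i, c k i * X i ω‖ ^ 2) μ := by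
    intro k
    have h := aux_integrable_mul (hS k) (aux_memℒp_star (hS k))
    have h2 : Integrable (fun ω => ((∑ i, c k i * X i ω) * star (∑ i, c k i * X i ω)).re) μ := by
      simpa using h.re
    exact h2.congr (Filter.Eventually.of_forall fun ω => (aux_normsq _).symm)
  have hinner : ∀ k, (∑ i, ∑ j, c k i * star (c k j) * G i j)
      = (∑ n, ∑ l, M n k l * star (M n k l)) + (σ : ℂ) ^ 2 * ∑ i, Aᴴ k i * star (Aᴴ k i) := by
    intro k
    rw [Fintype.sum_sum_type]
    congr 1
    · calc ∑ p : Fin N × Fin L, ∑ j, c k (Sum.inl p) * star (c k j) * G (Sum.inl p) j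
          = ∑ p : Fin N × Fin L, c k (Sum.inl p) * star (c k (Sum.inl p)) := by
            refine Finset.sum_congr rfl fun p _ => ?_
            rw [Fintype.sum_sum_type]
            simp [hGdef, Finset.sum_ite_eq, mul_ite]
        _ = ∑ n, ∑ l, M n k l * star (M n k l) := by
            rw [Fintype.sum_prod_type]
            simp [hcdef]
    · calc ∑ i, ∑ j, c k (Sum.inr i) * star (c k j) * G (Sum.inr i) j
          = ∑ i, c k (Sum.inr i) * star (c k (Sum.inr i)) * (σ : ℂ) ^ 2 := by
            refine Finset.sum_congr rfl fun i _ => ?_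
            rw [Fintype.sum_sum_type]
            simp [hGdef, Finset.sum_ite_eq, mul_ite]
        _ = (σ : ℂ) ^ 2 * ∑ i, Aᴴ k i * star (Aᴴ k i) := by
            rw [Finset.mul_sum]
            refine Finset.sum_congr rfl fun i _ => ?_
            simp only [hcdef, Sum.elim_inr]
            ring
  calc ∫ ω, ∑ k, ‖zhat ω k - ∑ n, z n ω k‖ ^ 2 ∂μ
      = ∫ ω, ∑ k, ‖∑ i, c k i * X i ω‖ ^ 2 ∂μ := by
        refine integral_congr_ae (Filter.Eventually.of_forall fun ω => ?_)
        exact Finset.sum_congr rfl fun k _ => by rw [key ω k]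
    _ = ∑ k, ∫ ω, ‖∑ i, c k i * X i ω‖ ^ 2 ∂μ :=
        integral_finset_sum _ (fun k _ => hint k)
    _ = ∑ k, (∑ i, ∑ j, c k i * star (c k j) * G i j).re := by
        refine Finset.sum_congr rfl fun k _ => ?_
        rw [aux_quad X hX (c k)]
        congr 1
        exact Finset.sum_congr rfl fun i _ => Finset.sum_congr rfl fun j _ => by rw [hG i j]
    _ = (∑ n, (M n * (M n)ᴴ).trace.re) + σ ^ 2 * (Aᴴ * A).trace.re := by
        rw [Finset.sum_congr rfl fun k _ => by rw [hinner k]]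
        simp only [Complex.add_re]
        rw [Finset.sum_add_distrib]
        congr 1
        · simp only [Complex.re_sum]
          rw [Finset.sum_comm]
          refine Finset.sum_congr rfl fun n _ => ?_
          simp [Matrix.trace, Matrix.mul_apply, Matrix.conjTranspose_apply, Complex.re_sum]
        · have hcast : ((σ : ℂ)) ^ 2 = ((σ ^ 2 : ℝ) : ℂ) := by push_cast; ring
          rw [Finset.sum_congr rfl fun k _ => by rw [hcast, Complex.re_ofReal_mul]]
          rw [← Finset.mul_sum]
          congr 1
          simp [Matrix.trace, Matrix.mul_apply, Matrix.conjTranspose_apply, Complex.re_sum,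
            star_star]
end

section
/- Let ρ^τ ∈ (0,1] be a sequence with Σ_τ ρ^τ τ^{-1/2} < ∞, and let e^τ be a sequence in ℝ^d with ‖e^τ‖ ≤ C/√τ for all τ ≥ 1. Define u^τ = (1−ρ^τ)u^{τ−1} + ρ^τ (v + e^τ) with u^{−1} = 0 and fixed v ∈ ℝ^d, where additionally Σ_τ ρ^τ = ∞ and lim ρ^τ = 0. Then u^τ → v as τ → ∞. -/
open Filter Finset

/-- Key deterministic lemma: a nonnegative sequence satisfying
`a (n+1) ≤ (1 - ρ (n+1)) * a n + ε (n+1)` with `ρ ∈ (0,1]` nonsummable and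
`ε` summable nonnegative tends to `0`. -/
lemma aux_recursive_tendsto_zero (a ρ ε : ℕ → ℝ) (ha : ∀ n, 0 ≤ a n)
    (hρ : ∀ n, ρ n ∈ Set.Ioc (0 : ℝ) 1) (hρdiv : ¬ Summable ρ)
    (hε : Summable ε) (hεnn : ∀ n, 0 ≤ ε n)
    (hrec : ∀ n, a (n + 1) ≤ (1 - ρ (n + 1)) * a n + ε (n + 1)) :
    Tendsto a atTop (nhds 0) := by
  have hρnn : ∀ n, (0:ℝ) ≤ 1 - ρ n := fun n => by linarith [(hρ n).2]
  have hρle : ∀ n, (1:ℝ) - ρ n ≤ 1 := fun n => by linarith [(hρ n).1]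
  rw [Metric.tendsto_atTop]
  intro δ hδ
  -- choose m so that the tail of ε beyond m is < δ/2
  have htail : Tendsto (fun i => ∑' k, ε (k + i)) atTop (nhds 0) :=
    tendsto_sum_nat_add ε
  obtain ⟨m₀, hm₀⟩ := Metric.tendsto_atTop.1 htail (δ / 2) (by linarith)
  set m := m₀ with hm_def
  have htail' : ∑' k, ε (k + (m + 1)) < δ / 2 := by
    have h := hm₀ (m + 1) (Nat.le_succ m)
    rwa [Real.dist_eq, sub_zero,
      abs_of_nonneg (tsum_nonneg fun k => hεnn _)] at h
  -- the key recursive bound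
  have key : ∀ N, m ≤ N →
      a N ≤ (∏ k ∈ Ico (m+1) (N+1), (1 - ρ k)) * a m + ∑ k ∈ Ico (m+1) (N+1), ε k := by
    intro N hN
    induction N, hN using Nat.le_induction with
    | base => simp
    | succ N hN ih =>
      have hmN : m + 1 ≤ N + 1 := by omega
      have h1 : a (N+1) ≤ (1 - ρ (N+1)) * a N + ε (N+1) := hrec N
      have h2 : (1 - ρ (N+1)) * a N ≤
          (1 - ρ (N+1)) * ((∏ k ∈ Ico (m+1) (N+1), (1 - ρ k)) * a m
            + ∑ k ∈ Ico (m+1) (N+1), ε k) :=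
        mul_le_mul_of_nonneg_left ih (hρnn _)
      rw [Finset.prod_Ico_succ_top hmN, Finset.sum_Ico_succ_top hmN]
      have hεs : (0:ℝ) ≤ ∑ k ∈ Ico (m+1) (N+1), ε k :=
        Finset.sum_nonneg fun k _ => hεnn k
      have hP : (0:ℝ) ≤ (∏ k ∈ Ico (m+1) (N+1), (1 - ρ k)) * a m :=
        mul_nonneg (Finset.prod_nonneg fun k _ => hρnn k) (ha m)
      nlinarith [hρnn (N+1), hρle (N+1)]
  -- tail sums of ε are bounded by δ/2
  have hsum_bound : ∀ N, m ≤ N → ∑ k ∈ Ico (m+1) (N+1), ε k ≤ δ / 2 := by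
    intro N hN
    refine le_of_lt (lt_of_le_of_lt ?_ htail')
    rw [Finset.sum_Ico_eq_sum_range]
    calc ∑ i ∈ range (N + 1 - (m+1)), ε (m + 1 + i)
        = ∑ i ∈ range (N + 1 - (m+1)), ε (i + (m+1)) := by
          refine Finset.sum_congr rfl fun i _ => by rw [add_comm]
      _ ≤ ∑' k, ε (k + (m+1)) :=
          Summable.sum_le_tsum _ (fun i _ => hεnn _) ((summable_nat_add_iff (m+1)).2 hε)
  -- the product term tends to 0
  have hprod : Tendsto (fun N => (∏ k ∈ Ico (m+1) (N+1), (1 - ρ k)) * a m)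
      atTop (nhds 0) := by
    have hρnn' : ∀ n, 0 ≤ ρ n := fun n => le_of_lt (hρ n).1
    have hT : Tendsto (fun N : ℕ => ∑ k ∈ Ico (m+1) (N+1), ρ k) atTop atTop := by
      have hfull : Tendsto (fun n : ℕ => ∑ i ∈ range n, ρ i) atTop atTop :=
        (not_summable_iff_tendsto_nat_atTop_of_nonneg hρnn').1 hρdiv
      have hfull' : Tendsto (fun N : ℕ => ∑ i ∈ range (N+1), ρ i) atTop atTop :=
        hfull.comp (tendsto_add_atTop_nat 1)
      have hsub : Tendsto (fun N : ℕ => ∑ i ∈ range (N+1), ρ i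
          - ∑ i ∈ range (m+1), ρ i) atTop atTop :=
        tendsto_atTop_add_const_right _ _ hfull'
      refine hsub.congr' ?_
      filter_upwards [eventually_ge_atTop m] with N hN
      rw [eq_comm, Finset.sum_Ico_eq_sub _ (by omega : m + 1 ≤ N + 1)]
    have hbound : ∀ N, (∏ k ∈ Ico (m+1) (N+1), (1 - ρ k))
        ≤ Real.exp (-(∑ k ∈ Ico (m+1) (N+1), ρ k)) := by
      intro N
      calc ∏ k ∈ Ico (m+1) (N+1), (1 - ρ k)
          ≤ ∏ k ∈ Ico (m+1) (N+1), Real.exp (-ρ k) :=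
            Finset.prod_le_prod (fun k _ => hρnn k)
              (fun k _ => by linarith [Real.add_one_le_exp (-ρ k)])
        _ = Real.exp (∑ k ∈ Ico (m+1) (N+1), -ρ k) := (Real.exp_sum _ _).symm
        _ = Real.exp (-(∑ k ∈ Ico (m+1) (N+1), ρ k)) := by rw [Finset.sum_neg_distrib]
    have hexp : Tendsto (fun N => Real.exp (-(∑ k ∈ Ico (m+1) (N+1), ρ k)))
        atTop (nhds 0) :=
      Real.tendsto_exp_atBot.comp (tendsto_neg_atTop_atBot.comp hT)
    have hsq : Tendsto (fun N => ∏ k ∈ Ico (m+1) (N+1), (1 - ρ k)) atTop (nhds 0) :=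
      squeeze_zero (fun N => Finset.prod_nonneg fun k _ => hρnn k) hbound hexp
    simpa using hsq.mul_const (a m)
  -- conclude
  obtain ⟨M, hM⟩ := Metric.tendsto_atTop.1 hprod (δ/2) (by linarith)
  refine ⟨max m M, fun N hN => ?_⟩
  have hNm : m ≤ N := le_trans (le_max_left _ _) hN
  have hNM : M ≤ N := le_trans (le_max_right _ _) hN
  have h1 := key N hNm
  have h2 := hsum_bound N hNm
  have h3 := hM N hNM
  rw [Real.dist_eq, sub_zero] at h3 ⊢
  rw [abs_of_nonneg (ha N)]
  have h4 : (∏ k ∈ Ico (m+1) (N+1), (1 - ρ k)) * a m < δ / 2 :=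
    lt_of_le_of_lt (le_abs_self _) h3
  linarith

/-- Deterministic recursive-averaging convergence: if `ρ^τ ∈ (0,1]`, `ρ^τ → 0`,
`Σ ρ^τ = ∞`, `Σ ρ^τ τ^{-1/2} < ∞`, the bias satisfies `‖e^τ‖ ≤ C/√τ` for `τ ≥ 1`, and
`u^τ = (1−ρ^τ)u^{τ−1} + ρ^τ(v + e^τ)` with `u^{−1} = 0`, then `u^τ → v`. -/
theorem recursive_tracking_converges (d : ℕ) (ρ : ℕ → ℝ)
    (hρ : ∀ τ, ρ τ ∈ Set.Ioc (0 : ℝ) 1)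
    (hρ0 : Tendsto ρ atTop (nhds 0))
    (hρdiv : ¬ Summable ρ)
    (hρsqrt : Summable fun τ => ρ τ / Real.sqrt τ)
    (C : ℝ) (v : EuclideanSpace ℝ (Fin d)) (e : ℕ → EuclideanSpace ℝ (Fin d))
    (he : ∀ τ : ℕ, 1 ≤ τ → ‖e τ‖ ≤ C / Real.sqrt τ)
    (u : ℕ → EuclideanSpace ℝ (Fin d))
    (hu0 : u 0 = ρ 0 • (v + e 0))
    (hurec : ∀ τ : ℕ, u (τ + 1) = (1 - ρ (τ + 1)) • u τ + ρ (τ + 1) • (v + e (τ + 1))) :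
    Tendsto u atTop (nhds v) := by
  have hC : 0 ≤ C := by
    have h := he 1 le_rfl
    have h0 : (0:ℝ) ≤ ‖e 1‖ := norm_nonneg _
    have : (0:ℝ) ≤ C / Real.sqrt 1 := le_trans h0 (by exact_mod_cast h)
    simpa using this
  have hεnn : ∀ n : ℕ, 0 ≤ C * (ρ n / Real.sqrt n) := fun n =>
    mul_nonneg hC (div_nonneg (le_of_lt (hρ n).1) (Real.sqrt_nonneg _))
  have hεsum : Summable (fun n : ℕ => C * (ρ n / Real.sqrt n)) := hρsqrt.mul_left C
  have hrec : ∀ n : ℕ, ‖u (n+1) - v‖ ≤ (1 - ρ (n + 1)) * ‖u n - v‖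
      + C * (ρ (n+1) / Real.sqrt ((n+1 : ℕ) : ℝ)) := by
    intro n
    have h1 : u (n+1) - v = (1 - ρ (n+1)) • (u n - v) + ρ (n+1) • e (n+1) := by
      rw [hurec n]; module
    calc ‖u (n+1) - v‖ = ‖(1 - ρ (n+1)) • (u n - v) + ρ (n+1) • e (n+1)‖ := by rw [h1]
      _ ≤ ‖(1 - ρ (n+1)) • (u n - v)‖ + ‖ρ (n+1) • e (n+1)‖ := norm_add_le _ _
      _ = |1 - ρ (n+1)| * ‖u n - v‖ + |ρ (n+1)| * ‖e (n+1)‖ := by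
          rw [norm_smul, norm_smul, Real.norm_eq_abs, Real.norm_eq_abs]
      _ ≤ (1 - ρ (n+1)) * ‖u n - v‖ + C * (ρ (n+1) / Real.sqrt ((n+1 : ℕ) : ℝ)) := by
          have hb1 : |1 - ρ (n+1)| = 1 - ρ (n+1) :=
            abs_of_nonneg (by linarith [(hρ (n+1)).2])
          have hb2 : |ρ (n+1)| = ρ (n+1) := abs_of_pos (hρ (n+1)).1
          rw [hb1, hb2]
          have hbe : ‖e (n+1)‖ ≤ C / Real.sqrt ((n+1 : ℕ) : ℝ) := he (n+1) (by omega)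
          have h3 : ρ (n+1) * ‖e (n+1)‖ ≤ ρ (n+1) * (C / Real.sqrt ((n+1 : ℕ) : ℝ)) :=
            mul_le_mul_of_nonneg_left hbe (le_of_lt (hρ (n+1)).1)
          have heq : ρ (n+1) * (C / Real.sqrt ((n+1 : ℕ) : ℝ))
              = C * (ρ (n+1) / Real.sqrt ((n+1 : ℕ) : ℝ)) := by ring
          rw [heq] at h3
          exact add_le_add (le_refl _) h3
  have hmain : Tendsto (fun n => ‖u n - v‖) atTop (nhds 0) :=
    aux_recursive_tendsto_zero (fun n => ‖u n - v‖) ρ (fun n => C * (ρ n / Real.sqrt n))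
      (fun n => norm_nonneg _) hρ hρdiv hεsum hεnn hrec
  rw [tendsto_iff_norm_sub_tendsto_zero]
  exact hmain
end
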